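/- For each positive integer R define the polynomials P_R(M) = Σ_{k=0}^R M^k/(k!·(2R−2k)!) and P̃_R(M) = Σ_{k=0}^R M^k/(k!·(2^{R−k}·(R−k)!)²). Then: (a) for every real M ≥ 0, P_R(M) > 0 and P̃_R(M) > 0; (b) for every positive integer R there exist real numbers M < 0 and M̃ < 0 such that P_R(M) < 0 and P̃_R(M̃) < 0. -/

import Mathlib

open Finset MeasureTheory

lemma alt_sum_choose (R : ℕ) (hR : R ≠ 0) :
    ∑ k ∈ range (R + 1), (-1 : ℝ) ^ k / (k.factorial * (R - k).factorial) = 0 := by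
  have h : ∀ k ∈ range (R + 1), (-1 : ℝ) ^ k / (k.factorial * (R - k).factorial)
      = ((-1 : ℝ) ^ k * R.choose k) / R.factorial := by
    intro k hk
    have hk' : k ≤ R := Nat.lt_succ_iff.mp (mem_range.mp hk)
    have h2 : ((R.choose k : ℝ)) * k.factorial * (R - k).factorial = R.factorial := by
      exact_mod_cast congrArg (Nat.cast (R := ℝ)) (Nat.choose_mul_factorial_mul_factorial hk')
    have hkf : (k.factorial : ℝ) ≠ 0 := by positivity
    have hrkf : ((R - k).factorial : ℝ) ≠ 0 := by positivity
    have hRf : (R.factorial : ℝ) ≠ 0 := by positivity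
    rw [div_eq_div_iff (by positivity) (by positivity)]
    rw [mul_assoc, ← h2]; ring
  rw [Finset.sum_congr rfl h, ← Finset.sum_div]
  have h3 : ∑ k ∈ range (R + 1), (-1 : ℝ) ^ k * R.choose k = 0 := by
    have := Int.alternating_sum_range_choose_of_ne hR
    exact_mod_cast congrArg (fun z : ℤ => (z : ℝ)) this
  rw [h3, zero_div]

lemma moment_nat (j : ℕ) :
    ∫ u in Set.Ioi (0:ℝ), u ^ j * Real.exp (-u) = j.factorial := by
  have h1 : Real.Gamma ((j : ℝ) + 1) = ∫ u in Set.Ioi (0:ℝ), Real.exp (-u) * u ^ (((j:ℝ) + 1) - 1) := by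
    exact Real.Gamma_eq_integral (by positivity)
  rw [Real.Gamma_nat_eq_factorial] at h1
  rw [h1]
  refine setIntegral_congr_fun measurableSet_Ioi (fun u hu => ?_)
  have hu' : (0:ℝ) < u := hu
  rw [add_sub_cancel_right, Real.rpow_natCast, mul_comm]

lemma integrable_moment_nat (j : ℕ) :
    IntegrableOn (fun u => u ^ j * Real.exp (-u)) (Set.Ioi (0:ℝ)) := by
  have := Real.GammaIntegral_convergent (s := (j:ℝ) + 1) (by positivity)
  refine this.congr_fun (fun u hu => ?_) measurableSet_Ioi
  have hu' : (0:ℝ) < u := hu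
  beta_reduce
  rw [add_sub_cancel_right, Real.rpow_natCast, mul_comm]

lemma gamma_half (j : ℕ) :
    Real.Gamma ((j : ℝ) + 1/2) = Real.sqrt Real.pi * (2*j).factorial / (4^j * j.factorial) := by
  induction j with
  | zero => simpa using Real.Gamma_one_half_eq
  | succ n ih =>
    have h0 : ((n:ℝ) + 1/2) ≠ 0 := by positivity
    have : Real.Gamma (((n:ℝ) + 1/2) + 1) = ((n:ℝ) + 1/2) * Real.Gamma ((n:ℝ) + 1/2) :=
      Real.Gamma_add_one h0
    have harg : ((n+1 : ℕ) : ℝ) + 1/2 = ((n:ℝ) + 1/2) + 1 := by push_cast; ring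
    rw [harg, this, ih]
    have e1 : (2*(n+1)).factorial = (2*n+2) * ((2*n+1) * (2*n).factorial) := by
      have : 2*(n+1) = (2*n+1) + 1 := by ring
      rw [this, Nat.factorial_succ]
      have h5 : 2*n+1 = (2*n) + 1 := rfl
      rw [h5, Nat.factorial_succ]
    have e2 : (n+1).factorial = (n+1) * n.factorial := Nat.factorial_succ n
    rw [e1, e2]
    push_cast
    have hnf : (n.factorial : ℝ) ≠ 0 := by positivity
    have h4 : (4:ℝ)^n ≠ 0 := by positivity
    field_simp
    ring

lemma moment_half (j : ℕ) :
    ∫ u in Set.Ioi (0:ℝ), u ^ j * (Real.exp (-u) * u ^ (-(1/2) : ℝ))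
      = Real.sqrt Real.pi * (2*j).factorial / (4^j * j.factorial) := by
  have h1 : Real.Gamma ((j : ℝ) + 1/2)
      = ∫ u in Set.Ioi (0:ℝ), Real.exp (-u) * u ^ (((j:ℝ) + 1/2) - 1) := by
    exact Real.Gamma_eq_integral (by positivity)
  rw [← gamma_half, h1]
  refine setIntegral_congr_fun measurableSet_Ioi (fun u hu => ?_)
  have hu' : (0:ℝ) < u := hu
  have : u ^ (((j:ℝ) + 1/2) - 1) = u ^ j * u ^ (-(1/2) : ℝ) := by
    rw [← Real.rpow_natCast u j, ← Real.rpow_add hu']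
    congr 1; ring
  rw [this]; ring

lemma integrable_moment_half (j : ℕ) :
    IntegrableOn (fun u => u ^ j * (Real.exp (-u) * u ^ (-(1/2) : ℝ))) (Set.Ioi (0:ℝ)) := by
  have := Real.GammaIntegral_convergent (s := (j:ℝ) + 1/2) (by positivity)
  refine this.congr_fun (fun u hu => ?_) measurableSet_Ioi
  have hu' : (0:ℝ) < u := hu
  have : u ^ (((j:ℝ) + 1/2) - 1) = u ^ j * u ^ (-(1/2) : ℝ) := by
    rw [← Real.rpow_natCast u j, ← Real.rpow_add hu']
    congr 1; ring
  beta_reduce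
  rw [this]; ring

lemma exists_neg_aux (R : ℕ) (c : ℕ → ℝ) (hc : ∀ k, 0 < c k) (a : ℝ) (ha : 0 < a)
    (w : ℝ → ℝ) (hw : ∀ u ∈ Set.Ioi (0:ℝ), 0 < w u)
    (hint : ∀ k ∈ range (R+1), IntegrableOn (fun u => u ^ (R-k) * w u) (Set.Ioi (0:ℝ)))
    (hmom : ∑ k ∈ range (R+1), ((-1:ℝ))^k * a^(R-k) / (k.factorial * c k)
        * ∫ u in Set.Ioi (0:ℝ), u ^ (R-k) * w u = 0) :
    ∃ M : ℝ, M < 0 ∧ ∑ k ∈ range (R+1), M ^ k / (k.factorial * c k) < 0 := by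
  by_contra hcon
  push_neg at hcon
  set f : ℝ → ℝ := fun u => ∑ k ∈ range (R+1),
    ((-1:ℝ))^k * a^(R-k) / (k.factorial * c k) * u ^ (R-k) with hf
  -- f is nonnegative on Ioi 0
  have hfnn : ∀ u ∈ Set.Ioi (0:ℝ), 0 ≤ f u := by
    intro u hu
    have hu' : (0:ℝ) < u := hu
    have hau : 0 < a * u := mul_pos ha hu'
    set M : ℝ := -1 / (a * u) with hM
    have hMneg : M < 0 := by
      rw [hM]; exact div_neg_of_neg_of_pos (by norm_num) hau
    have hP := hcon M hMneg
    have key : f u = (a*u)^R * ∑ k ∈ range (R+1), M ^ k / (k.factorial * c k) := by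
      rw [hf, Finset.mul_sum]
      refine Finset.sum_congr rfl (fun k hk => ?_)
      have hk' : k ≤ R := Nat.lt_succ_iff.mp (mem_range.mp hk)
      have hne : (a*u) ≠ 0 := ne_of_gt hau
      have hMk : M ^ k = (-1:ℝ)^k / (a*u)^k := by
        rw [hM, div_pow]
      rw [hMk]
      have hpow : (a*u)^R = (a*u)^(R-k) * (a*u)^k := by
        rw [← pow_add, Nat.sub_add_cancel hk']
      rw [hpow, mul_pow]
      have hck : (k.factorial : ℝ) * c k ≠ 0 := by
        have := hc k; positivity
      field_simp
    rw [key]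
    have : 0 < (a*u)^R := pow_pos hau R
    positivity
  -- the weighted function
  have hintf : IntegrableOn (fun u => f u * w u) (Set.Ioi (0:ℝ)) := by
    have : (fun u => f u * w u) = fun u => ∑ k ∈ range (R+1),
        ((-1:ℝ))^k * a^(R-k) / (k.factorial * c k) * (u ^ (R-k) * w u) := by
      funext u; rw [hf, Finset.sum_mul]; exact Finset.sum_congr rfl (fun k _ => by ring)
    rw [this]
    exact integrable_finset_sum _ (fun k hk => (hint k hk).const_mul _)
  have hizero : ∫ u in Set.Ioi (0:ℝ), f u * w u = 0 := by
    have heq : (fun u => f u * w u) = fun u => ∑ k ∈ range (R+1),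
        ((-1:ℝ))^k * a^(R-k) / (k.factorial * c k) * (u ^ (R-k) * w u) := by
      funext u; rw [hf, Finset.sum_mul]; exact Finset.sum_congr rfl (fun k _ => by ring)
    rw [heq, integral_finset_sum _ (fun k hk => (hint k hk).const_mul _)]
    simpa [integral_const_mul] using hmom
  -- conclude f * w = 0 a.e. on Ioi 0
  have hae : (fun u => f u * w u) =ᵐ[volume.restrict (Set.Ioi (0:ℝ))] 0 := by
    rw [← integral_eq_zero_iff_of_nonneg_ae ?_ hintf] at *
    · exact hizero
    · refine (ae_restrict_iff' measurableSet_Ioi).2 (ae_of_all _ (fun u hu => ?_))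
      exact mul_nonneg (hfnn u hu) (le_of_lt (hw u hu))
  -- f is continuous and nonzero at 0, contradiction
  have hfc : Continuous f := by
    rw [hf]
    exact continuous_finset_sum _ (fun k _ => continuous_const.mul (continuous_pow _))
  have hf0 : f 0 = (-1:ℝ)^R / (R.factorial * c R) := by
    have hb : f 0 = ∑ k ∈ range (R+1),
        ((-1:ℝ))^k * a^(R-k) / (k.factorial * c k) * (0:ℝ) ^ (R-k) := rfl
    rw [hb, Finset.sum_eq_single_of_mem R (self_mem_range_succ R)]
    · simp
    · intro k hk hkR
      have hk' : k ≤ R := Nat.lt_succ_iff.mp (mem_range.mp hk)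
      have : 0 < R - k := Nat.sub_pos_of_lt (lt_of_le_of_ne hk' hkR)
      rw [zero_pow (Nat.pos_iff_ne_zero.mp this), mul_zero]
  have hf0ne : f 0 ≠ 0 := by
    rw [hf0]
    have := hc R
    have h1 : ((-1:ℝ))^R ≠ 0 := by
      rcases neg_one_pow_eq_one_iff_even (R := ℝ) (by norm_num) |>.symm with _
      rcases Nat.even_or_odd R with he | ho
      · rw [he.neg_one_pow]; norm_num
      · rw [ho.neg_one_pow]; norm_num
    have h2 : (R.factorial : ℝ) * c R ≠ 0 := by positivity
    exact div_ne_zero h1 h2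
  have hopen : IsOpen (f ⁻¹' {(0:ℝ)}ᶜ) := (isOpen_compl_singleton).preimage hfc
  obtain ⟨ε, hε, hball⟩ := Metric.isOpen_iff.mp hopen 0 hf0ne
  -- measure of the bad set
  have hsub : Set.Ioo (0:ℝ) ε ⊆ {u | ¬ (f u * w u = 0)} := by
    intro u hu
    have hu1 : u ∈ Set.Ioi (0:ℝ) := hu.1
    have hfu : f u ≠ 0 := by
      apply hball
      rw [Metric.mem_ball, Real.dist_eq, sub_zero, abs_of_pos hu.1]
      exact hu.2
    have hwu : w u ≠ 0 := ne_of_gt (hw u hu1)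
    exact mul_ne_zero hfu hwu
  have hzero : volume.restrict (Set.Ioi (0:ℝ)) {u | ¬ (f u * w u = 0)} = 0 := by
    have := hae
    rw [Filter.EventuallyEq, ae_iff] at this
    simpa using this
  have hle : volume.restrict (Set.Ioi (0:ℝ)) (Set.Ioo (0:ℝ) ε) = 0 :=
    le_antisymm (hzero ▸ measure_mono hsub) zero_le
  rw [Measure.restrict_apply measurableSet_Ioo] at hle
  have : Set.Ioo (0:ℝ) ε ∩ Set.Ioi (0:ℝ) = Set.Ioo (0:ℝ) ε := by
    ext u; simp only [Set.mem_inter_iff, Set.mem_Ioo, Set.mem_Ioi]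
    exact ⟨fun h => h.1, fun h => ⟨h, h.1⟩⟩
  rw [this, Real.volume_Ioo, sub_zero] at hle
  exact absurd hle (by simp [hε, ne_of_gt hε])

lemma exists_neg_first (R : ℕ) (hR : 0 < R) :
    ∃ M : ℝ, M < 0 ∧
      (∑ k ∈ Finset.range (R + 1),
        M ^ k / ((k.factorial : ℝ) * ((2 * R - 2 * k).factorial : ℝ))) < 0 := by
  have := exists_neg_aux R (fun k => ((2 * R - 2 * k).factorial : ℝ))
    (fun k => by positivity) 4 (by norm_num)
    (fun u => Real.exp (-u) * u ^ (-(1/2) : ℝ))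
    (fun u hu => mul_pos (Real.exp_pos _) (Real.rpow_pos_of_pos hu _))
    (fun k _ => integrable_moment_half (R - k)) ?_
  · exact this
  · have hcongr : ∀ k ∈ range (R+1),
        ((-1:ℝ))^k * 4^(R-k) / (k.factorial * ((2 * R - 2 * k).factorial : ℝ))
          * ∫ u in Set.Ioi (0:ℝ), u ^ (R-k) * (Real.exp (-u) * u ^ (-(1/2) : ℝ))
        = Real.sqrt Real.pi * ((-1:ℝ)^k / (k.factorial * (R - k).factorial)) := by
      intro k hk
      rw [moment_half (R - k)]
      have h2 : 2 * R - 2 * k = 2 * (R - k) := by omega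
      rw [h2]
      have h1 : ((2 * (R - k)).factorial : ℝ) ≠ 0 := by positivity
      have h3 : ((R - k).factorial : ℝ) ≠ 0 := by positivity
      have h4 : (k.factorial : ℝ) ≠ 0 := by positivity
      have h5 : (4:ℝ)^(R-k) ≠ 0 := by positivity
      field_simp
    rw [Finset.sum_congr rfl hcongr, ← Finset.mul_sum,
      alt_sum_choose R (Nat.pos_iff_ne_zero.mp hR), mul_zero]

lemma exists_neg_second (R : ℕ) (hR : 0 < R) :
    ∃ M : ℝ, M < 0 ∧
      (∑ k ∈ Finset.range (R + 1),
        M ^ k / ((k.factorial : ℝ) *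
          ((2 : ℝ) ^ (R - k) * ((R - k).factorial : ℝ)) ^ 2)) < 0 := by
  have := exists_neg_aux R (fun k => ((2:ℝ) ^ (R - k) * ((R - k).factorial : ℝ)) ^ 2)
    (fun k => by positivity) 4 (by norm_num)
    (fun u => Real.exp (-u))
    (fun u _ => Real.exp_pos _)
    (fun k _ => integrable_moment_nat (R - k)) ?_
  · exact this
  · have hcongr : ∀ k ∈ range (R+1),
        ((-1:ℝ))^k * 4^(R-k) / (k.factorial * ((2:ℝ) ^ (R - k) * ((R - k).factorial : ℝ)) ^ 2)
          * ∫ u in Set.Ioi (0:ℝ), u ^ (R-k) * Real.exp (-u)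
        = (-1:ℝ)^k / (k.factorial * (R - k).factorial) := by
      intro k hk
      rw [moment_nat (R - k)]
      have h4pow : ((2:ℝ) ^ (R - k)) ^ 2 = 4 ^ (R - k) := by
        rw [← pow_mul, mul_comm (R-k) 2, pow_mul]; norm_num
      rw [mul_pow, h4pow]
      have h3 : ((R - k).factorial : ℝ) ≠ 0 := by positivity
      have h4 : (k.factorial : ℝ) ≠ 0 := by positivity
      have h5 : (4:ℝ)^(R-k) ≠ 0 := by positivity
      field_simp
    rw [Finset.sum_congr rfl hcongr,
      alt_sum_choose R (Nat.pos_iff_ne_zero.mp hR)]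


/-- **Lemma 3.7.**  For each positive integer `R` define
`P_R(M) = ∑_{k=0}^R M^k / (k! (2R−2k)!)` and
`P̃_R(M) = ∑_{k=0}^R M^k / (k! (2^{R−k} (R−k)!)²)`.
Then `P_R(M) > 0` and `P̃_R(M) > 0` for every `M ≥ 0`, and there exist negative
reals `M`, `M̃` with `P_R(M) < 0` and `P̃_R(M̃) < 0`. -/
theorem sphere_average_polynomials (R : ℕ) (hR : 0 < R) :
    (∀ M : ℝ, 0 ≤ M →
      0 < ∑ k ∈ Finset.range (R + 1),
            M ^ k / ((k.factorial : ℝ) * ((2 * R - 2 * k).factorial : ℝ)) ∧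
      0 < ∑ k ∈ Finset.range (R + 1),
            M ^ k / ((k.factorial : ℝ) *
              ((2 : ℝ) ^ (R - k) * ((R - k).factorial : ℝ)) ^ 2)) ∧
    (∃ M : ℝ, M < 0 ∧
      (∑ k ∈ Finset.range (R + 1),
        M ^ k / ((k.factorial : ℝ) * ((2 * R - 2 * k).factorial : ℝ))) < 0) ∧
    (∃ M : ℝ, M < 0 ∧
      (∑ k ∈ Finset.range (R + 1),
        M ^ k / ((k.factorial : ℝ) *
          ((2 : ℝ) ^ (R - k) * ((R - k).factorial : ℝ)) ^ 2)) < 0) := by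
  refine ⟨fun M hM => ⟨?_, ?_⟩, exists_neg_first R hR, exists_neg_second R hR⟩
  · refine Finset.sum_pos' (fun k _ => div_nonneg (pow_nonneg hM k) (by positivity))
      ⟨0, mem_range.mpr (Nat.succ_pos R), ?_⟩
    rw [pow_zero]
    positivity
  · refine Finset.sum_pos' (fun k _ => div_nonneg (pow_nonneg hM k) (by positivity))
      ⟨0, mem_range.mpr (Nat.succ_pos R), ?_⟩
    rw [pow_zero]
    positivity
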